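/- For any graph G on n vertices and any k ∈ ℕ with k ≥ 1, the DP color function satisfies P_DP(G, k+1)/(k+1)^n ≥ P_DP(G, k)/k^n. -/

import Mathlib

open scoped Classical

/-- Number of proper `k`-colorings of `G` (the chromatic polynomial evaluated at `k`). -/
noncomputable def properCount {V : Type*} (G : SimpleGraph V) (k : ℕ) : ℕ :=
  Nat.card {f : V → Fin k // ∀ u v, G.Adj u v → f u ≠ f v}

/-- Number of proper `L`-colorings of `G` for a list assignment `L`. -/
noncomputable def listCount {V : Type*} (G : SimpleGraph V) (L : V → Finset ℕ) : ℕ :=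
  Nat.card {f : V → ℕ // (∀ v, f v ∈ L v) ∧ ∀ u v, G.Adj u v → f u ≠ f v}

/-- The list color function `P_ℓ(G, k)`. -/
noncomputable def listColorFn {V : Type*} (G : SimpleGraph V) (k : ℕ) : ℕ :=
  sInf {m | ∃ L : V → Finset ℕ, (∀ v, (L v).card = k) ∧ m = listCount G L}

/-- `H` (on vertex set `V × Fin k`, with `L v = {v} × Fin k`) is a `k`-fold DP-cover of `G`:
each part is a clique, cross-edges only between parts of adjacent vertices, and the
cross-edges between parts of adjacent vertices form a matching. -/
def IsDPCover {V : Type*} (G : SimpleGraph V) (k : ℕ) (H : SimpleGraph (V × Fin k)) : Prop :=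
  (∀ v : V, ∀ i j : Fin k, i ≠ j → H.Adj (v, i) (v, j)) ∧
  (∀ u v : V, ∀ i j : Fin k, H.Adj (u, i) (v, j) → u = v ∨ G.Adj u v) ∧
  (∀ u v : V, G.Adj u v →
    (∀ i j j' : Fin k, H.Adj (u, i) (v, j) → H.Adj (u, i) (v, j') → j = j') ∧
    (∀ i i' j : Fin k, H.Adj (u, i) (v, j) → H.Adj (u, i') (v, j) → i = i'))

/-- A full `k`-fold DP-cover: the matching between the parts of adjacent vertices is perfect. -/
def IsFullDPCover {V : Type*} (G : SimpleGraph V) (k : ℕ) (H : SimpleGraph (V × Fin k)) : Prop :=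
  IsDPCover G k H ∧ ∀ u v : V, G.Adj u v → ∀ i : Fin k, ∃! j : Fin k, H.Adj (u, i) (v, j)

/-- The number of `H`-colorings of `G` (independent sets of `H` with one vertex in each part,
encoded as functions `V → Fin k`). -/
noncomputable def dpCount {V : Type*} (k : ℕ) (H : SimpleGraph (V × Fin k)) : ℕ :=
  Nat.card {f : V → Fin k // ∀ u v : V, u ≠ v → ¬ H.Adj (u, f u) (v, f v)}

/-- The DP color function `P_DP(G, k)`. -/
noncomputable def dpColorFn {V : Type*} (G : SimpleGraph V) (k : ℕ) : ℕ :=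
  sInf {m | ∃ H : SimpleGraph (V × Fin k), IsDPCover G k H ∧ m = dpCount k H}

/-- The dual DP color function `P*_DP(G, k)`. -/
noncomputable def dualDPColorFn {V : Type*} (G : SimpleGraph V) (k : ℕ) : ℕ :=
  sSup {m | ∃ H : SimpleGraph (V × Fin k), IsFullDPCover G k H ∧ m = dpCount k H}

/-- The trivial cover: each part is a clique, no cross-edges. -/
private def trivCover (V : Type*) (k : ℕ) : SimpleGraph (V × Fin k) where
  Adj p q := p.1 = q.1 ∧ p.2 ≠ q.2
  symm := by constructor; rintro p q ⟨h1, h2⟩; exact ⟨h1.symm, h2.symm⟩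
  loopless := by constructor; rintro p ⟨h1, h2⟩; exact h2 rfl

private lemma trivCover_isDPCover {V : Type*} (G : SimpleGraph V) (k : ℕ) :
    IsDPCover G k (trivCover V k) := by
  refine ⟨fun v i j hij => ⟨rfl, hij⟩, fun u v i j h => Or.inl h.1, fun u v huv => ?_⟩
  constructor
  · rintro i j j' ⟨h, -⟩ -
    exact absurd h (G.ne_of_adj huv)
  · rintro i i' j ⟨h, -⟩ -
    exact absurd h (G.ne_of_adj huv)

private lemma dpColorFn_mem {V : Type*} (G : SimpleGraph V) (k : ℕ) :
    ∃ H : SimpleGraph (V × Fin k), IsDPCover G k H ∧ dpColorFn G k = dpCount k H := by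
  have hne : {m | ∃ H : SimpleGraph (V × Fin k), IsDPCover G k H ∧ m = dpCount k H}.Nonempty :=
    ⟨dpCount k (trivCover V k), trivCover V k, trivCover_isDPCover G k, rfl⟩
  exact Nat.sInf_mem hne

private lemma dpColorFn_le {V : Type*} (G : SimpleGraph V) (k : ℕ)
    (H : SimpleGraph (V × Fin k)) (hH : IsDPCover G k H) :
    dpColorFn G k ≤ dpCount k H :=
  Nat.sInf_le ⟨H, hH, rfl⟩

private lemma key_count {V : Type*} [Fintype V] (G : SimpleGraph V) (k : ℕ)
    (H : SimpleGraph (V × Fin (k + 1))) (hH : IsDPCover G (k + 1) H) :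
    dpColorFn G k * (k + 1) ^ (Fintype.card V) ≤ dpCount (k + 1) H * k ^ (Fintype.card V) := by
  classical
  set n := Fintype.card V
  -- restricted covers
  set HS : (V → Fin (k + 1)) → SimpleGraph (V × Fin k) :=
    fun S => H.comap (fun p => (p.1, (S p.1).succAbove p.2)) with hHS
  have hadjS : ∀ S u v (i j : Fin k),
      (HS S).Adj (u, i) (v, j) ↔ H.Adj (u, (S u).succAbove i) (v, (S v).succAbove j) := by
    intro S u v i j
    simp [hHS, SimpleGraph.comap]
  have hcov : ∀ S, IsDPCover G k (HS S) := by
    intro S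
    refine ⟨?_, ?_, ?_⟩
    · intro v i j hij
      rw [hadjS]
      exact hH.1 v _ _ (fun h => hij (Fin.succAbove_right_injective h))
    · intro u v i j h
      rw [hadjS] at h
      exact hH.2.1 u v _ _ h
    · intro u v huv
      constructor
      · intro i j j' h h'
        rw [hadjS] at h h'
        exact Fin.succAbove_right_injective ((hH.2.2 u v huv).1 _ _ _ h h')
      · intro i i' j h h'
        rw [hadjS] at h h'
        exact Fin.succAbove_right_injective ((hH.2.2 u v huv).2 _ _ _ h h')
  -- the proper-coloring predicate for H
  set P : (V → Fin (k + 1)) → Prop :=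
    fun g => ∀ u v : V, u ≠ v → ¬ H.Adj (u, g u) (v, g v) with hP
  -- count of restricted cover equals count of colorings of H avoiding S
  have hcount : ∀ S : V → Fin (k + 1),
      dpCount k (HS S) = (Finset.univ.filter (fun g => P g ∧ ∀ v, g v ≠ S v)).card := by
    intro S
    have hbij : Function.Bijective
        (fun f : {f : V → Fin k // ∀ u v : V, u ≠ v → ¬ (HS S).Adj (u, f u) (v, f v)} =>
          (⟨fun v => (S v).succAbove (f.1 v), by
            refine ⟨fun u v huv hadj => f.2 u v huv ?_, fun v => Fin.succAbove_ne _ _⟩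
            rw [hadjS]; exact hadj⟩ :
            {g : V → Fin (k + 1) // P g ∧ ∀ v, g v ≠ S v})) := by
      constructor
      · intro f1 f2 h
        apply Subtype.ext
        funext v
        have := congrFun (congrArg Subtype.val h) v
        exact Fin.succAbove_right_injective this
      · rintro ⟨g, hg, hgS⟩
        have hex : ∀ v, ∃ i : Fin k, (S v).succAbove i = g v :=
          fun v => Fin.exists_succAbove_eq (hgS v)
        refine ⟨⟨fun v => (hex v).choose, ?_⟩, ?_⟩
        · intro u v huv hadj
          rw [hadjS, (hex u).choose_spec, (hex v).choose_spec] at hadj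
          exact hg u v huv hadj
        · apply Subtype.ext
          funext v
          exact (hex v).choose_spec
    calc dpCount k (HS S)
        = Nat.card {g : V → Fin (k + 1) // P g ∧ ∀ v, g v ≠ S v} :=
          Nat.card_congr (Equiv.ofBijective _ hbij)
      _ = Fintype.card {g : V → Fin (k + 1) // P g ∧ ∀ v, g v ≠ S v} :=
          Nat.card_eq_fintype_card
      _ = (Finset.univ.filter (fun g => P g ∧ ∀ v, g v ≠ S v)).card :=
          Fintype.card_subtype _
  -- dpCount (k+1) H as a filter card
  have hdpH : dpCount (k + 1) H = (Finset.univ.filter P).card := by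
    calc dpCount (k + 1) H = Fintype.card {g : V → Fin (k + 1) // P g} :=
          Nat.card_eq_fintype_card
      _ = (Finset.univ.filter P).card := Fintype.card_subtype _
  -- for each coloring g, the number of S avoiding g is k^n
  have havoid : ∀ g : V → Fin (k + 1),
      (Finset.univ.filter (fun S : V → Fin (k + 1) => ∀ v, g v ≠ S v)).card = k ^ n := by
    intro g
    calc (Finset.univ.filter (fun S : V → Fin (k + 1) => ∀ v, g v ≠ S v)).card
        = Fintype.card {S : V → Fin (k + 1) // ∀ v, g v ≠ S v} :=
          (Fintype.card_subtype _).symm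
      _ = Fintype.card (∀ v : V, {j : Fin (k + 1) // g v ≠ j}) :=
          Fintype.card_congr (Equiv.subtypePiEquivPi)
      _ = ∏ v : V, Fintype.card {j : Fin (k + 1) // g v ≠ j} := Fintype.card_pi
      _ = ∏ _v : V, k := by
          refine Finset.prod_congr rfl fun v _ => ?_
          have h1 : Fintype.card {j : Fin (k + 1) // g v = j} = 1 := by
            rw [Fintype.card_eq_one_iff]
            exact ⟨⟨g v, rfl⟩, by rintro ⟨j, rfl⟩; rfl⟩
          have := Fintype.card_subtype_compl (fun j : Fin (k + 1) => g v = j)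
          rw [this, h1, Fintype.card_fin]
          omega
      _ = k ^ n := by rw [Finset.prod_const, Finset.card_univ]
  -- double counting
  have hsum : ∑ S : V → Fin (k + 1),
      (Finset.univ.filter (fun g => P g ∧ ∀ v, g v ≠ S v)).card
      = dpCount (k + 1) H * k ^ n := by
    have h1 : ∀ S : V → Fin (k + 1),
        (Finset.univ.filter (fun g => P g ∧ ∀ v, g v ≠ S v)).card
        = ∑ g : V → Fin (k + 1), if P g ∧ ∀ v, g v ≠ S v then 1 else 0 := by
      intro S; rw [Finset.card_filter]
    calc ∑ S : V → Fin (k + 1),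
          (Finset.univ.filter (fun g => P g ∧ ∀ v, g v ≠ S v)).card
        = ∑ S : V → Fin (k + 1), ∑ g : V → Fin (k + 1),
            if P g ∧ ∀ v, g v ≠ S v then 1 else 0 := by
          exact Finset.sum_congr rfl fun S _ => h1 S
      _ = ∑ g : V → Fin (k + 1), ∑ S : V → Fin (k + 1),
            if P g ∧ ∀ v, g v ≠ S v then 1 else 0 := Finset.sum_comm
      _ = ∑ g : V → Fin (k + 1), if P g then k ^ n else 0 := by
          refine Finset.sum_congr rfl fun g _ => ?_
          by_cases hg : P g
          · rw [if_pos hg, ← havoid g, Finset.card_filter]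
            refine Finset.sum_congr rfl fun S _ => ?_
            by_cases hC : ∀ v, g v ≠ S v
            · rw [if_pos ⟨hg, hC⟩, if_pos hC]
            · rw [if_neg (fun h => hC h.2), if_neg hC]
          · rw [if_neg hg]
            exact Finset.sum_eq_zero fun S _ => if_neg (fun h => hg h.1)
      _ = ∑ g ∈ Finset.univ.filter P, k ^ n := (Finset.sum_filter _ _).symm
      _ = dpCount (k + 1) H * k ^ n := by
          rw [Finset.sum_const, smul_eq_mul, ← hdpH]
  -- put together
  calc dpColorFn G k * (k + 1) ^ n
      = ∑ _S : V → Fin (k + 1), dpColorFn G k := by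
        rw [Finset.sum_const, Finset.card_univ, smul_eq_mul, mul_comm]
        congr 1
        rw [Fintype.card_fun, Fintype.card_fin]
    _ ≤ ∑ S : V → Fin (k + 1), dpCount k (HS S) :=
        Finset.sum_le_sum fun S _ => dpColorFn_le G k (HS S) (hcov S)
    _ = ∑ S : V → Fin (k + 1),
          (Finset.univ.filter (fun g => P g ∧ ∀ v, g v ≠ S v)).card :=
        Finset.sum_congr rfl fun S _ => hcount S
    _ = dpCount (k + 1) H * k ^ n := hsum

theorem stmt1 {V : Type*} [Fintype V] (G : SimpleGraph V) (k : ℕ) (hk : 1 ≤ k) :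
    (dpColorFn G (k + 1) : ℝ) / ((k : ℝ) + 1) ^ (Fintype.card V) ≥
      (dpColorFn G k : ℝ) / (k : ℝ) ^ (Fintype.card V) := by
  classical
  obtain ⟨H, hH, hEq⟩ := dpColorFn_mem G (k + 1)
  have key := key_count G k H hH
  rw [← hEq] at key
  have hk0 : (0 : ℝ) < (k : ℝ) := by exact_mod_cast hk
  have hk1 : (0 : ℝ) < (k : ℝ) + 1 := by positivity
  rw [ge_iff_le, div_le_div_iff₀ (pow_pos hk0 _) (pow_pos hk1 _)]
  have : ((dpColorFn G k * (k + 1) ^ (Fintype.card V) : ℕ) : ℝ)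
      ≤ ((dpColorFn G (k + 1) * k ^ (Fintype.card V) : ℕ) : ℝ) := by exact_mod_cast key
  push_cast at this
  linarith
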